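/- Let T > 0, y ∈ ℝ, ε ∈ (0,1), and σ > 0 satisfy σ/T ≥ √(ln(2(1 + 1/ε))/π). Then the Gaussian mass of the T-spaced, y-offset one-dimensional lattice satisfies (1 − ε)/T ≤ ∑_{i ∈ ℤ} σ^{−1} exp(−π(Ti + y)²/σ²) ≤ (1 + ε)/T. -/

import Mathlib

open Real Complex

lemma aux_summable_geom_int {r : ℝ} (hr0 : 0 ≤ r) (hr1 : r < 1) :
    Summable (fun n : ℤ => r ^ n.natAbs) := by
  apply Summable.of_nat_of_neg <;>
    simpa using summable_geometric_of_lt_one hr0 hr1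

lemma aux_tsum_geom_hole {r : ℝ} (hr0 : 0 ≤ r) (hr1 : r < 1) :
    (∑' n : ℤ, if n = 0 then (0:ℝ) else r ^ n.natAbs) = 2 * r / (1 - r) := by
  have hsum : Summable (fun n : ℕ => if n = 0 then (0:ℝ) else r ^ n) := by
    apply Summable.of_nonneg_of_le (fun n => by positivity) (fun n => ?_)
      (summable_geometric_of_lt_one hr0 hr1)
    split <;> simp [pow_nonneg hr0]
  have hnat : (∑' n : ℕ, if n = 0 then (0:ℝ) else r ^ n) = r / (1 - r) := by
    have := Summable.tsum_eq_add_tsum_ite (summable_geometric_of_lt_one hr0 hr1) 0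
    rw [tsum_geometric_of_lt_one hr0 hr1] at this
    have h1 : (∑' n : ℕ, if n = 0 then (0:ℝ) else r ^ n) = (1-r)⁻¹ - 1 := by
      rw [this]; simp
    rw [h1]
    have : (1:ℝ) - r ≠ 0 := by linarith
    field_simp
    ring
  have e1 : (fun n : ℕ => if (n:ℤ) = 0 then (0:ℝ) else r ^ (n:ℤ).natAbs)
      = fun n : ℕ => if n = 0 then (0:ℝ) else r ^ n := by
    funext n; simp
  have e2 : (fun n : ℕ => if (-(n:ℤ)) = 0 then (0:ℝ) else r ^ (-(n:ℤ)).natAbs)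
      = fun n : ℕ => if n = 0 then (0:ℝ) else r ^ n := by
    funext n; simp
  rw [Summable.tsum_of_nat_of_neg (by rw [e1]; exact hsum) (by rw [e2]; exact hsum), e1, e2, hnat]
  simp; ring



/-- Let `T > 0`, `y ∈ ℝ`, `ε ∈ (0,1)`, and `σ > 0` satisfy
`σ/T ≥ √(ln(2(1 + 1/ε))/π)`. Then the Gaussian mass of the `T`-spaced, `y`-offset
one-dimensional lattice satisfies
`(1 − ε)/T ≤ ∑_{i ∈ ℤ} σ⁻¹ exp(−π(Ti + y)²/σ²) ≤ (1 + ε)/T`. -/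
theorem gaussian_mass_spaced_offset_lattice (T y ε σ : ℝ) (hT : 0 < T)
    (hε : ε ∈ Set.Ioo (0:ℝ) 1) (hσ : 0 < σ)
    (h : σ / T ≥ Real.sqrt (Real.log (2 * (1 + 1 / ε)) / Real.pi)) :
    (1 - ε) / T ≤ (∑' i : ℤ, σ⁻¹ * Real.exp (-Real.pi * (T * i + y) ^ 2 / σ ^ 2)) ∧
      (∑' i : ℤ, σ⁻¹ * Real.exp (-Real.pi * (T * i + y) ^ 2 / σ ^ 2)) ≤ (1 + ε) / T := by
  obtain ⟨hε0, hε1⟩ := hε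
  set s : ℝ := σ / T with hs_def
  have hs : 0 < s := div_pos hσ hT
  -- the smoothing condition
  have hlogpos : 0 ≤ Real.log (2 * (1 + 1 / ε)) := by
    apply Real.log_nonneg
    have : 0 < 1 / ε := by positivity
    linarith
  have hL : Real.log (2 * (1 + 1 / ε)) ≤ Real.pi * s ^ 2 := by
    have h2 : (Real.sqrt (Real.log (2 * (1 + 1 / ε)) / Real.pi)) ^ 2 ≤ s ^ 2 :=
      pow_le_pow_left₀ (Real.sqrt_nonneg _) h 2
    rw [Real.sq_sqrt (by positivity)] at h2
    rw [div_le_iff₀ Real.pi_pos] at h2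
    linarith [h2]
  set c : ℝ := Real.pi * s ^ 2 with hc_def
  have hc : 0 < c := by positivity
  set r : ℝ := Real.exp (-c) with hr_def
  have hr0 : 0 < r := Real.exp_pos _
  have hr_le : r ≤ ε / (2 * ε + 2) := by
    have h1 : r ≤ Real.exp (-(Real.log (2 * (1 + 1 / ε)))) :=
      Real.exp_le_exp.2 (neg_le_neg hL)
    rw [Real.exp_neg, Real.exp_log (by positivity)] at h1
    have h2 : (2 * (1 + 1 / ε)) = (2 * ε + 2) / ε := by
      field_simp
    rw [h2, inv_div] at h1
    exact h1
  have hr1 : r < 1 := Real.exp_lt_one_iff.2 (by linarith)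
  -- Poisson summation
  set a : ℂ := ((s ^ 2 : ℝ) : ℂ) with ha_def
  have ha : 0 < a.re := by
    rw [ha_def, Complex.ofReal_re]; positivity
  set b : ℂ := -Complex.I * ((y / T : ℝ) : ℂ) with hb_def
  have key := Complex.tsum_exp_neg_quadratic ha b
  -- simplify sqrt of a
  have hsqrt : a ^ (1 / 2 : ℂ) = (s : ℂ) := by
    rw [ha_def, show (1/2 : ℂ) = ((1/2 : ℝ) : ℂ) by norm_num,
      ← Complex.ofReal_cpow (by positivity), ← Real.rpow_natCast s 2,
      ← Real.rpow_mul hs.le]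
    norm_num
  -- RHS of Poisson: a real sum
  set R : ℝ := ∑' n : ℤ, Real.exp (-Real.pi / s ^ 2 * ((n : ℝ) + y / T) ^ 2) with hR_def
  have hRHS : (∑' n : ℤ, Complex.exp (-Real.pi / a * ((n : ℂ) + Complex.I * b) ^ 2)) = (R : ℂ) := by
    rw [hR_def, Complex.ofReal_tsum]
    congr 1; funext n
    have hIb : Complex.I * b = ((y / T : ℝ) : ℂ) := by
      rw [hb_def]; rw [show Complex.I * (-Complex.I * ((y / T : ℝ) : ℂ))
        = -(Complex.I * Complex.I) * ((y / T : ℝ) : ℂ) by ring, Complex.I_mul_I]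
      ring
    rw [hIb, Complex.ofReal_exp, ha_def]
    congr 1
    push_cast
    ring
  set f : ℤ → ℂ := fun n => Complex.exp (-Real.pi * a * (n : ℂ) ^ 2 + 2 * Real.pi * b * (n : ℂ))
    with hf_def
  set C : ℂ := ∑' n : ℤ, f n with hC_def
  have hPoisson : (R : ℂ) = (s : ℂ) * C := by
    have hsne : (s : ℂ) ≠ 0 := by exact_mod_cast hs.ne'
    rw [key, hsqrt, hRHS]
    field_simp
  -- norms of terms
  have hnorm : ∀ n : ℤ, ‖f n‖ = Real.exp (-c * (n : ℝ) ^ 2) := by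
    intro n
    rw [hf_def]
    simp only [Complex.norm_exp]
    have harg : (-(Real.pi:ℂ) * a * (n : ℂ) ^ 2 + 2 * (Real.pi:ℂ) * b * (n : ℂ))
        = ((-(c * (n:ℝ) ^ 2) : ℝ) : ℂ) + ((-(2 * Real.pi * (y / T) * (n:ℝ)) : ℝ) : ℂ) * Complex.I := by
      rw [ha_def, hb_def, hc_def]
      push_cast
      ring
    rw [harg]
    simp only [Complex.add_re, Complex.ofReal_re, Complex.mul_re, Complex.I_re,
      Complex.ofReal_im, Complex.I_im]
    norm_num
  have hbound : ∀ n : ℤ, Real.exp (-c * (n : ℝ) ^ 2) ≤ r ^ n.natAbs := by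
    intro n
    rw [hr_def, ← Real.exp_nat_mul]
    apply Real.exp_le_exp.2
    have h1 : ((n.natAbs : ℝ)) ≤ ((n.natAbs : ℝ)) ^ 2 := by
      exact_mod_cast Nat.le_self_pow two_ne_zero n.natAbs
    have h2 : ((n : ℝ)) ^ 2 = ((n.natAbs : ℝ)) ^ 2 := by
      rw [Nat.cast_natAbs]; push_cast; rw [_root_.sq_abs]
    nlinarith [hc, h1, h2]
  have hgeo := aux_summable_geom_int hr0.le hr1
  have hf_sum : Summable f := by
    apply Summable.of_norm
    apply Summable.of_nonneg_of_le (fun n => norm_nonneg _) (fun n => ?_) hgeo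
    rw [hnorm n]; exact hbound n
  -- split off n = 0
  have hsplit := Summable.tsum_eq_add_tsum_ite hf_sum 0
  have hf0 : f 0 = 1 := by rw [hf_def]; simp
  -- the error sum
  have hFnorm_sum : Summable (fun n : ℤ => ‖if n = 0 then (0:ℂ) else f n‖) := by
    apply Summable.of_nonneg_of_le (fun n => norm_nonneg _) (fun n => ?_) hgeo
    by_cases hn : n = 0
    · simp [hn, pow_nonneg hr0.le]
    · simp only [hn, if_false]; rw [hnorm n]; exact hbound n
  have herr : ‖C - 1‖ ≤ ε := by
    have hC1 : C - 1 = ∑' n : ℤ, if n = 0 then (0:ℂ) else f n := by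
      rw [hC_def, hsplit, hf0]; ring
    rw [hC1]
    calc ‖∑' n : ℤ, if n = 0 then (0:ℂ) else f n‖
        ≤ ∑' n : ℤ, ‖if n = 0 then (0:ℂ) else f n‖ := norm_tsum_le_tsum_norm hFnorm_sum
      _ ≤ ∑' n : ℤ, (if n = 0 then (0:ℝ) else r ^ n.natAbs) := by
          have hGsum : Summable (fun n : ℤ => if n = 0 then (0:ℝ) else r ^ n.natAbs) := by
            apply Summable.of_nonneg_of_le (fun n => ?_) (fun n => ?_) hgeo
            · split
              · norm_num
              · positivity
            · split <;> simp [pow_nonneg hr0.le]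
          apply Summable.tsum_le_tsum _ hFnorm_sum hGsum
          intro n
          by_cases hn : n = 0
          · simp [hn]
          · simp only [hn, if_false]; rw [hnorm n]; exact hbound n
      _ = 2 * r / (1 - r) := aux_tsum_geom_hole hr0.le hr1
      _ ≤ ε := by
          rw [div_le_iff₀ (by linarith)]
          have hstep : (2 + ε) * r ≤ ε := by
            have h3 : (2 + ε) * r ≤ (2 + ε) * (ε / (2 * ε + 2)) :=
              mul_le_mul_of_nonneg_left hr_le (by linarith)
            have h4 : (2 + ε) * (ε / (2 * ε + 2)) ≤ ε := by
              rw [← mul_div_assoc, div_le_iff₀ (by linarith)]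
              nlinarith
            linarith
          nlinarith [hstep, hr0.le, hε0.le]
  -- relate the target sum to C
  set S : ℝ := ∑' i : ℤ, σ⁻¹ * Real.exp (-Real.pi * (T * i + y) ^ 2 / σ ^ 2) with hS_def
  have hSR : S = σ⁻¹ * R := by
    rw [hS_def, hR_def, ← tsum_mul_left]
    congr 1; funext n
    congr 1
    rw [hs_def]
    field_simp
  have hTSC : T * S = C.re := by
    have hR_eq : R = s * C.re := by
      have := congrArg Complex.re hPoisson
      simpa [Complex.ofReal_re, Complex.mul_re, Complex.ofReal_im] using this
    rw [hSR, hR_eq, hs_def]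
    field_simp
  have hre : |C.re - 1| ≤ ε := by
    have : |(C - 1).re| ≤ ‖C - 1‖ := Complex.abs_re_le_norm _
    simpa using this.trans herr
  rw [abs_le] at hre
  constructor
  · rw [div_le_iff₀ hT, mul_comm]
    linarith [hTSC ▸ hre.1]
  · rw [le_div_iff₀ hT, mul_comm]
    linarith [hTSC ▸ hre.2]
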